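/- Let n be a positive integer. A compact Hausdorff space K satisfies odeg(K) ≤ n if and only if K is a continuous image of a compact Hausdorff n-fibered space. -/

import Mathlib

open TopologicalSpace

/-- For `n ≥ 1`, a topological space `X` is `n`-fibered if there is a continuous map from
`X` to a metrizable space all of whose fibers have at most `n` elements. -/
def NFibered (n : ℕ) (X : Type*) [TopologicalSpace X] : Prop :=
  ∃ (M : Type) (_ : TopologicalSpace M), MetrizableSpace M ∧
    ∃ f : X → M, Continuous f ∧ ∀ z : M, (f ⁻¹' {z}).encard ≤ n

/-- `odeg(K) ≤ n` : there is a countable family `𝒪` of open subsets of `K` such that for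
all pairwise distinct points `x₀, …, xₙ` of `K` there are `W₀, …, Wₙ ∈ 𝒪` with
`x_i ∈ W_i` for each `i` and `W₀ ∩ ⋯ ∩ Wₙ = ∅`. -/
def OdegLe (K : Type*) [TopologicalSpace K] (n : ℕ) : Prop :=
  ∃ O : Set (Set K), O.Countable ∧ (∀ W ∈ O, IsOpen W) ∧
    ∀ x : Fin (n + 1) → K, Function.Injective x →
      ∃ W : Fin (n + 1) → Set K,
        (∀ i, W i ∈ O) ∧ (∀ i, x i ∈ W i) ∧ (⋂ i, W i) = ∅

universe u

open Set

private lemma OdegAux.encard_le_of_no_inj {α : Type*} (n : ℕ) {s : Set α}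
    (h : ∀ x : Fin (n+1) → α, (∀ i, x i ∈ s) → ¬ Function.Injective x) :
    s.encard ≤ n := by
  by_contra hlt
  push_neg at hlt
  have h1 : ((n+1 : ℕ) : ℕ∞) ≤ s.encard := by
    exact_mod_cast Order.add_one_le_of_lt hlt
  obtain ⟨t, hts, htc⟩ := Set.exists_subset_encard_eq h1
  have hfin : t.Finite := Set.finite_of_encard_eq_coe htc
  have hcard : hfin.toFinset.card = n + 1 := by
    have := hfin.encard_eq_coe_toFinset_card
    rw [htc] at this
    exact_mod_cast this.symm
  set e := hfin.toFinset.equivFin with he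
  refine h (fun i => (e.symm (finCongr hcard.symm i) : α)) (fun i => ?_) (fun i j hij => ?_)
  · exact hts (hfin.mem_toFinset.mp (e.symm _).2)
  · have : e.symm (finCongr hcard.symm i) = e.symm (finCongr hcard.symm j) :=
      Subtype.ext hij
    exact (finCongr hcard.symm).injective (e.symm.injective this)

private lemma OdegAux.inj_le_encard {α : Type*} (n : ℕ) {s : Set α} (x : Fin (n+1) → α)
    (hx : Function.Injective x) (hmem : ∀ i, x i ∈ s) : ((n+1:ℕ) : ℕ∞) ≤ s.encard := by
  have h1 : Set.range x ⊆ s := range_subset_iff.mpr hmem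
  have h2 : (Set.range x).encard = (n+1 : ℕ) := by
    rw [← image_univ, hx.encard_image _, encard_univ]
    simp
  calc ((n+1:ℕ) : ℕ∞) = (Set.range x).encard := h2.symm
    _ ≤ s.encard := Set.encard_mono h1

set_option maxHeartbeats 1000000 in
/-- A compact Hausdorff space `K` satisfies `odeg(K) ≤ n` (for a positive integer `n`) if
and only if `K` is a continuous image of a compact Hausdorff `n`-fibered space. -/
theorem odegLe_iff_image_of_nFibered (n : ℕ) (hn : 0 < n)
    (K : Type u) [TopologicalSpace K] [CompactSpace K] [T2Space K] :
    OdegLe K n ↔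
      ∃ (L : Type u) (_ : TopologicalSpace L), CompactSpace L ∧ T2Space L ∧
        NFibered n L ∧ ∃ g : L → K, Continuous g ∧ Function.Surjective g := by
  constructor
  · intro hodeg
    classical
    obtain ⟨O, hOc, hOopen, hOsep⟩ := hodeg
    -- enumerate `O ∪ {∅}` by the naturals
    obtain ⟨V, hV⟩ := (hOc.insert (∅ : Set K)).exists_eq_range ⟨∅, mem_insert _ _⟩
    have hVopen : ∀ k, IsOpen (V k) := by
      intro k
      have : V k ∈ insert (∅ : Set K) O := hV ▸ mem_range_self k
      rcases mem_insert_iff.mp this with h | h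
      · rw [h]; exact isOpen_empty
      · exact hOopen _ h
    have hsep : ∀ x : Fin (n+1) → K, Function.Injective x →
        ∃ κ : Fin (n+1) → ℕ, (∀ i, x i ∈ V (κ i)) ∧ (⋂ i, V (κ i)) = ∅ := by
      intro x hx
      obtain ⟨W, hWO, hWx, hWe⟩ := hOsep x hx
      have hex : ∀ i, ∃ k, V k = W i := by
        intro i
        have : W i ∈ insert (∅ : Set K) O := mem_insert_of_mem _ (hWO i)
        rw [hV] at this
        exact this
      choose κ hκ using hex
      refine ⟨κ, fun i => (hκ i).symm ▸ hWx i, ?_⟩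
      rw [iInter_congr hκ]
      exact hWe
    -- the graph map
    set φ : K → K × (ℕ → Bool) :=
      fun x => (x, fun k => if x ∈ V k then true else false) with hφ
    set Lset : Set (K × (ℕ → Bool)) := closure (Set.range φ) with hLset
    refine ⟨↥Lset, inferInstance, ?_, inferInstance, ?_, ?_⟩
    · exact isCompact_iff_compactSpace.mp (isClosed_closure.isCompact)
    · -- NFibered
      refine ⟨ℕ → Bool, inferInstance, inferInstance,
        fun p => p.1.2, (continuous_snd.comp continuous_subtype_val), fun z => ?_⟩
      apply OdegAux.encard_le_of_no_inj
      intro y hy hyinj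
      set x : Fin (n+1) → K := fun i => (y i).1.1 with hx
      have hsnd : ∀ i, (y i).1.2 = z := fun i => hy i
      have hxmem : ∀ i, ((x i, z) : K × (ℕ → Bool)) ∈ Lset := by
        intro i
        have : ((x i, z) : K × (ℕ → Bool)) = (y i).1 := by
          exact Prod.ext rfl (hsnd i).symm
        rw [this]; exact (y i).2
      have hxinj : Function.Injective x := by
        intro i j hij
        apply hyinj
        apply Subtype.ext
        exact Prod.ext hij ((hsnd i).trans (hsnd j).symm)
      obtain ⟨κ, hκx, hκe⟩ := hsep x hxinj
      -- step 1: z (κ i) = true for all i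
      have hz1 : ∀ i, z (κ i) = true := by
        intro i
        have hopen2 : IsOpen {w : ℕ → Bool | w (κ i) = z (κ i)} := by
          have : {w : ℕ → Bool | w (κ i) = z (κ i)} =
              (fun w : ℕ → Bool => w (κ i)) ⁻¹' {z (κ i)} := by ext w; simp
          rw [this]
          exact (isOpen_discrete _).preimage (continuous_apply (κ i))
        have hN : IsOpen ((V (κ i)) ×ˢ {w : ℕ → Bool | w (κ i) = z (κ i)}) :=
          (hVopen (κ i)).prod hopen2
        have hmemN : ((x i, z) : K × (ℕ → Bool)) ∈
            (V (κ i)) ×ˢ {w : ℕ → Bool | w (κ i) = z (κ i)} := ⟨hκx i, rfl⟩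
        obtain ⟨p, hp1, hp2⟩ := mem_closure_iff.mp (hxmem i) _ hN hmemN
        obtain ⟨a, rfl⟩ := hp2
        have ha1 : a ∈ V (κ i) := hp1.1
        have ha2 : (φ a).2 (κ i) = z (κ i) := hp1.2
        rw [show (φ a).2 (κ i) = (if a ∈ V (κ i) then true else false) from rfl,
          if_pos ha1] at ha2
        exact ha2.symm
      -- step 2: contradiction
      have hN' : IsOpen ((univ : Set K) ×ˢ {w : ℕ → Bool | ∀ i, w (κ i) = true}) := by
        refine isOpen_univ.prod ?_
        have : {w : ℕ → Bool | ∀ i, w (κ i) = true} =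
            ⋂ i, (fun w : ℕ → Bool => w (κ i)) ⁻¹' {true} := by
          ext w; simp
        rw [this]
        exact isOpen_iInter_of_finite fun i =>
          (isOpen_discrete _).preimage (continuous_apply (κ i))
      have hmemN' : ((x 0, z) : K × (ℕ → Bool)) ∈
          (univ : Set K) ×ˢ {w : ℕ → Bool | ∀ i, w (κ i) = true} := ⟨trivial, hz1⟩
      obtain ⟨p, hp1, hp2⟩ := mem_closure_iff.mp (hxmem 0) _ hN' hmemN'
      obtain ⟨a, rfl⟩ := hp2
      have : a ∈ ⋂ i, V (κ i) := by
        refine mem_iInter.mpr fun i => ?_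
        have h2 := hp1.2 i
        rw [show (φ a).2 (κ i) = (if a ∈ V (κ i) then true else false) from rfl] at h2
        by_contra hc
        rw [if_neg hc] at h2
        exact Bool.false_ne_true h2
      rw [hκe] at this
      exact this
    · -- surjection
      refine ⟨fun p => p.1.1, continuous_fst.comp continuous_subtype_val, fun x => ?_⟩
      exact ⟨⟨φ x, subset_closure (mem_range_self x)⟩, rfl⟩
  · intro h
    classical
    obtain ⟨L, tL, hLcomp, hLt2, ⟨M, tM, hM, f, hf, hfib⟩, g, hg, hgs⟩ := h
    -- restrict to the image of f, a compact metrizable (hence second countable) space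
    set M₀ := ↥(Set.range f) with hM₀
    haveI : CompactSpace M₀ := isCompact_iff_compactSpace.mp (isCompact_range hf)
    letI : MetricSpace M₀ := TopologicalSpace.metrizableSpaceMetric M₀
    set f₀ : L → M₀ := fun y => ⟨f y, mem_range_self y⟩ with hf₀def
    have hf₀ : Continuous f₀ := hf.subtype_mk _
    -- countable basis of M₀
    obtain ⟨b, hbc, hbne, hbasis⟩ := TopologicalSpace.exists_countable_basis M₀
    obtain ⟨e, he⟩ := (hbc.insert (∅ : Set M₀)).exists_eq_range ⟨∅, mem_insert _ _⟩
    have heopen : ∀ k, IsOpen (e k) := by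
      intro k
      have : e k ∈ insert (∅ : Set M₀) b := he ▸ mem_range_self k
      rcases mem_insert_iff.mp this with h | h
      · rw [h]; exact isOpen_empty
      · exact hbasis.isOpen h
    -- the family
    set D : Set M₀ → Set K := fun U => {x | ∀ y, g y = x → f₀ y ∈ U} with hD
    have hDopen : ∀ U : Set M₀, IsOpen U → IsOpen (D U) := by
      intro U hU
      have hKey : D U = (g '' (f₀ ⁻¹' U)ᶜ)ᶜ := by
        ext x
        simp only [hD, mem_setOf_eq, mem_compl_iff, mem_image, not_exists, not_and]
        constructor
        · rintro hx y hy rfl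
          exact hy (hx y rfl)
        · intro hx y hy
          by_contra hc
          exact hx y hc hy
      rw [hKey]
      have hcl : IsClosed ((f₀ ⁻¹' U)ᶜ) := (hU.preimage hf₀).isClosed_compl
      exact (((hcl.isCompact).image hg).isClosed).isOpen_compl
    refine ⟨Set.range (fun s : Finset ℕ => D (⋃ k ∈ s, e k)), countable_range _, ?_, ?_⟩
    · rintro W ⟨s, rfl⟩
      exact hDopen _ (isOpen_biUnion fun k _ => heopen k)
    · intro x hxinj
      -- fibers over x i
      set C : Fin (n+1) → Set M₀ := fun i => f₀ '' (g ⁻¹' {x i}) with hC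
      have hCcomp : ∀ i, IsCompact (C i) :=
        fun i => ((isClosed_singleton.preimage hg).isCompact).image hf₀
      have hCne : ∀ i, (C i).Nonempty := by
        intro i
        obtain ⟨y, hy⟩ := hgs (x i)
        exact ⟨f₀ y, y, hy, rfl⟩
      have hCempty : (⋂ i, C i) = ∅ := by
        by_contra hcc
        obtain ⟨z, hz⟩ := nonempty_iff_ne_empty.mpr hcc
        have hzi : ∀ i, ∃ y, g y = x i ∧ f₀ y = z := by
          intro i
          obtain ⟨y, hy1, hy2⟩ := mem_iInter.mp hz i
          exact ⟨y, hy1, hy2⟩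
        choose y hy1 hy2 using hzi
        have hyinj : Function.Injective y := by
          intro i j hij
          apply hxinj
          rw [← hy1 i, ← hy1 j, hij]
        have hymem : ∀ i, y i ∈ f ⁻¹' {(z : M)} := by
          intro i
          have := hy2 i
          simp only [mem_preimage, mem_singleton_iff]
          exact congrArg Subtype.val this
        have := (OdegAux.inj_le_encard n y hyinj hymem).trans (hfib (z : M))
        have hcon : (n+1 : ℕ) ≤ n := by exact_mod_cast this
        omega
      -- a uniform positive distance
      have hne : Nonempty M₀ := ⟨(hCne 0).choose⟩
      set ρ : M₀ → ℝ := fun z => ∑ i : Fin (n+1), Metric.infDist z (C i) with hρ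
      have hρcont : Continuous ρ :=
        continuous_finset_sum _ fun i _ => Metric.continuous_infDist_pt _
      have hρpos : ∀ z, 0 < ρ z := by
        intro z
        have hzn : ∃ i, z ∉ C i := by
          by_contra hcz
          push_neg at hcz
          have : z ∈ ⋂ i, C i := mem_iInter.mpr hcz
          rw [hCempty] at this
          exact this
        obtain ⟨i, hi⟩ := hzn
        refine Finset.sum_pos' (fun j _ => Metric.infDist_nonneg) ⟨i, Finset.mem_univ i, ?_⟩
        exact ((hCcomp i).isClosed.notMem_iff_infDist_pos (hCne i)).mp hi
      obtain ⟨z₀, -, hz₀⟩ := isCompact_univ.exists_isMinOn univ_nonempty hρcont.continuousOn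
      set ε := ρ z₀ with hε
      have hεpos : 0 < ε := hρpos z₀
      have hεle : ∀ z, ε ≤ ρ z := fun z => hz₀ (mem_univ z)
      set U : Fin (n+1) → Set M₀ :=
        fun i => {z | Metric.infDist z (C i) < ε / (n+1)} with hU
      have hUopen : ∀ i, IsOpen (U i) :=
        fun i => isOpen_lt (Metric.continuous_infDist_pt _) continuous_const
      have hCU : ∀ i, C i ⊆ U i := by
        intro i z hzi
        show Metric.infDist z (C i) < ε / (n+1)
        rw [Metric.infDist_zero_of_mem hzi]
        positivity
      have hUempty : (⋂ i, U i) = ∅ := by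
        rw [eq_empty_iff_forall_notMem]
        intro z hz
        have hlt : ρ z < ε := by
          have : ∀ i ∈ Finset.univ, Metric.infDist z (C i) < ε / (n+1) :=
            fun i _ => mem_iInter.mp hz i
          calc ρ z < ∑ _i : Fin (n+1), ε / (n+1) :=
                Finset.sum_lt_sum_of_nonempty Finset.univ_nonempty this
            _ = (n+1) * (ε / (n+1)) := by
                rw [Finset.sum_const, Finset.card_univ, Fintype.card_fin, nsmul_eq_mul]
                push_cast
                ring
            _ = ε := by
                field_simp
        exact absurd (hεle z) (not_le.mpr hlt)
      -- refine C i ⊆ (finite union of basis sets) ⊆ U i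
      have href : ∀ i, ∃ s : Finset ℕ, C i ⊆ (⋃ k ∈ s, e k) ∧ (⋃ k ∈ s, e k) ⊆ U i := by
        intro i
        set ι := {v : Set M₀ // v ∈ b ∧ v ⊆ U i} with hι
        have hcov : C i ⊆ ⋃ v : ι, (v : Set M₀) := by
          intro z hz
          obtain ⟨v, hvb, hzv, hvU⟩ :=
            hbasis.exists_subset_of_mem_open (hCU i hz) (hUopen i)
          exact mem_iUnion.mpr ⟨⟨v, hvb, hvU⟩, hzv⟩
        obtain ⟨t, ht⟩ := (hCcomp i).elim_finite_subcover (fun v : ι => (v : Set M₀))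
          (fun v => hbasis.isOpen v.2.1) hcov
        have hex : ∀ v : ι, ∃ k, e k = (v : Set M₀) := by
          intro v
          have : (v : Set M₀) ∈ insert (∅ : Set M₀) b := mem_insert_of_mem _ v.2.1
          rw [he] at this
          exact this
        choose ks hks using hex
        refine ⟨t.image ks, ?_, ?_⟩
        · intro z hz
          obtain ⟨v, hvt, hzv⟩ := mem_iUnion₂.mp (ht hz)
          exact mem_iUnion₂.mpr ⟨ks v, Finset.mem_image_of_mem _ hvt, (hks v).symm ▸ hzv⟩
        · intro z hz
          obtain ⟨k, hk, hzk⟩ := mem_iUnion₂.mp hz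
          obtain ⟨v, hvt, rfl⟩ := Finset.mem_image.mp hk
          rw [hks v] at hzk
          exact v.2.2 hzk
      choose s hs1 hs2 using href
      refine ⟨fun i => D (⋃ k ∈ s i, e k), fun i => ⟨s i, rfl⟩, ?_, ?_⟩
      · intro i
        intro y hy
        exact hs1 i ⟨y, by simp [hy], rfl⟩
      · rw [eq_empty_iff_forall_notMem]
        intro p hp
        obtain ⟨y, hy⟩ := hgs p
        have : f₀ y ∈ ⋂ i, U i := by
          refine mem_iInter.mpr fun i => ?_
          exact hs2 i (mem_iInter.mp hp i y hy)
        rw [hUempty] at this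
        exact this
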